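/- For every integer n ≥ 1 there is a map Φ: M_n → H_{n−1} such that every fiber of Φ has exactly two elements, for each μ∈M_n either ρ(μ)=y²·ρ(Φ(μ)) or ρ(μ)=yt·ρ(Φ(μ)), with each of the two cases occurring for exactly one element of each fiber; consequently ρ(M_n) = (y²+yt)·ρ(H_{n−1}) in ℤ[y,t,q]. -/

import Mathlib

open Finset

/-- A step of a bicolored Motzkin path: up, down, straight level, wavy level. -/
inductive MStep where
  | U : MStep
  | D : MStep
  | L : MStep
  | W : MStep
deriving DecidableEq

/-- A weighted bicolored Motzkin path of length `n`: a sequence of steps together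
with, for each step, the triple `(a, b, c)` of exponents of its monomial weight
`y^a t^b q^c`. -/
structure WPath (n : ℕ) where
  step : Fin n → MStep
  wt : Fin n → ℕ × ℕ × ℕ

/-- The height increment of a step. -/
def dh : MStep → ℤ
  | MStep.U => 1
  | MStep.D => -1
  | MStep.L => 0
  | MStep.W => 0

/-- The height (of the starting point) of the `j`-th step; `ht μ n` is the final
height. -/
def ht {n : ℕ} (μ : WPath n) (j : ℕ) : ℤ :=
  ∑ k ∈ Finset.range j, if h : k < n then dh (μ.step ⟨k, h⟩) else 0

/-- The underlying path is a Motzkin path: stays weakly above the `x`-axis and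
ends on it. -/
def IsMotzkin {n : ℕ} (μ : WPath n) : Prop :=
  (∀ j ≤ n, 0 ≤ ht μ j) ∧ ht μ n = 0

/-- `y`, as the variable `X 0` of `ℤ[y,t,q]`. -/
noncomputable def yv : MvPolynomial (Fin 3) ℤ := MvPolynomial.X 0

/-- `t`, as the variable `X 1` of `ℤ[y,t,q]`. -/
noncomputable def tv : MvPolynomial (Fin 3) ℤ := MvPolynomial.X 1

/-- `q`, as the variable `X 2` of `ℤ[y,t,q]`. -/
noncomputable def qv : MvPolynomial (Fin 3) ℤ := MvPolynomial.X 2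

/-- The weight `ρ(μ) ∈ ℤ[y,t,q]`: the product of the step weights `y^a t^b q^c`. -/
noncomputable def rho {n : ℕ} (μ : WPath n) : MvPolynomial (Fin 3) ℤ :=
  ∏ j : Fin n, yv ^ (μ.wt j).1 * tv ^ (μ.wt j).2.1 * qv ^ (μ.wt j).2.2

/-- The exponent of `t` in the monomial `ρ(μ)`. -/
def tExp {n : ℕ} (μ : WPath n) : ℕ := ∑ j : Fin n, (μ.wt j).2.1

/-- The weight `w` is `y² q^c` with `lo ≤ c ≤ hi`. -/
def wY2 (w : ℕ × ℕ × ℕ) (lo hi : ℤ) : Prop :=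
  w.1 = 2 ∧ w.2.1 = 0 ∧ lo ≤ (w.2.2 : ℤ) ∧ (w.2.2 : ℤ) ≤ hi

/-- The weight `w` is `y t q^c` with `lo ≤ c ≤ hi`. -/
def wYT (w : ℕ × ℕ × ℕ) (lo hi : ℤ) : Prop :=
  w.1 = 1 ∧ w.2.1 = 1 ∧ lo ≤ (w.2.2 : ℤ) ∧ (w.2.2 : ℤ) ≤ hi

/-- The weight `w` is `q^c` with `lo ≤ c ≤ hi`. -/
def wQ (w : ℕ × ℕ × ℕ) (lo hi : ℤ) : Prop :=
  w.1 = 0 ∧ w.2.1 = 0 ∧ lo ≤ (w.2.2 : ℤ) ∧ (w.2.2 : ℤ) ≤ hi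

/-- `μ ∈ M_n`: no wavy level step on the `x`-axis, and at each step of height
`h`: up and straight level steps carry `y²q^c` (`c ≤ h`) or `ytq^c`
(`h ≤ c ≤ 2h`); wavy level steps (at height `h ≥ 1`) carry `q^c` (`c ≤ h-1`) or
`ytq^c` (`h ≤ c ≤ 2h-1`); down steps at height `h+1` carry `q^c` (`c ≤ h`) or
`ytq^c` (`h+1 ≤ c ≤ 2h+1`). -/
def Mcond {n : ℕ} (μ : WPath n) : Prop :=
  IsMotzkin μ ∧ ∀ j : Fin n,
    (μ.step j = MStep.U →
      wY2 (μ.wt j) 0 (ht μ j) ∨ wYT (μ.wt j) (ht μ j) (2 * ht μ j)) ∧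
    (μ.step j = MStep.L →
      wY2 (μ.wt j) 0 (ht μ j) ∨ wYT (μ.wt j) (ht μ j) (2 * ht μ j)) ∧
    (μ.step j = MStep.W →
      1 ≤ ht μ j ∧
        (wQ (μ.wt j) 0 (ht μ j - 1) ∨ wYT (μ.wt j) (ht μ j) (2 * ht μ j - 1))) ∧
    (μ.step j = MStep.D →
      wQ (μ.wt j) 0 (ht μ j - 1) ∨ wYT (μ.wt j) (ht μ j) (2 * ht μ j - 1))

/-- `μ ∈ H_n`: at each step of height `h`: up steps carry `y²q^c` (`c ≤ h+1`) or
`ytq^c` (`h+1 ≤ c ≤ 2h+2`); straight level steps carry `q^c` (`c ≤ h`) or `ytq^c`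
(`h+1 ≤ c ≤ 2h+1`); wavy level steps carry `y²q^c` (`c ≤ h`) or `ytq^c`
(`h ≤ c ≤ 2h`); down steps at height `h+1` carry `q^c` (`c ≤ h`) or `ytq^c`
(`h+1 ≤ c ≤ 2h+1`). -/
def Hcond {n : ℕ} (μ : WPath n) : Prop :=
  IsMotzkin μ ∧ ∀ j : Fin n,
    (μ.step j = MStep.U →
      wY2 (μ.wt j) 0 (ht μ j + 1) ∨ wYT (μ.wt j) (ht μ j + 1) (2 * ht μ j + 2)) ∧
    (μ.step j = MStep.L →
      wQ (μ.wt j) 0 (ht μ j) ∨ wYT (μ.wt j) (ht μ j + 1) (2 * ht μ j + 1)) ∧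
    (μ.step j = MStep.W →
      wY2 (μ.wt j) 0 (ht μ j) ∨ wYT (μ.wt j) (ht μ j) (2 * ht μ j)) ∧
    (μ.step j = MStep.D →
      wQ (μ.wt j) 0 (ht μ j - 1) ∨ wYT (μ.wt j) (ht μ j) (2 * ht μ j - 1))

/-- The up step `i` and the down step `j` form a matching pair: they face each
other, i.e. the horizontal segment between their midpoints stays under the path. -/
def Matching {n : ℕ} (μ : WPath n) (i j : Fin n) : Prop :=
  (i : ℕ) < (j : ℕ) ∧ μ.step i = MStep.U ∧ μ.step j = MStep.D ∧
    ht μ j = ht μ i + 1 ∧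
    ∀ k : ℕ, (i : ℕ) < k → k < (j : ℕ) → ht μ i + 1 ≤ ht μ k


/-! ### Auxiliary definitions -/

instance : Fintype MStep :=
  ⟨⟨{MStep.U, MStep.D, MStep.L, MStep.W}, by decide⟩, fun x => by cases x <;> decide⟩

def isUW : MStep → Bool
  | .U => true | .W => true | .L => false | .D => false

def isUL : MStep → Bool
  | .U => true | .L => true | .W => false | .D => false

def phiStepB (m : Bool) (cur : MStep) : MStep :=
  if m then (match cur with | .U => .U | .L => .U | .W => .L | .D => .L)
  else (match cur with | .U => .W | .L => .W | .W => .D | .D => .D)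

def psiStep (c : MStep) (b : Bool) : MStep :=
  if isUW c then (if b then .U else .L) else (if b then .W else .D)

/-- The step at position `j` (as a natural number), defaulting to `L`. -/
def stepAt {n : ℕ} (μ : WPath n) (j : ℕ) : MStep :=
  if h : j < n then μ.step ⟨j, h⟩ else MStep.L

def wtAt {n : ℕ} (μ : WPath n) (j : ℕ) : ℕ × ℕ × ℕ :=
  if h : j < n then μ.wt ⟨j, h⟩ else (0, 0, 0)

def phi {m : ℕ} (μ : WPath (m + 1)) : WPath m where
  step j := phiStepB (isUW (stepAt μ j)) (stepAt μ (j + 1))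
  wt j := wtAt μ (j + 1)

def nmB {m : ℕ} (ν : WPath m) (j : ℕ) : Bool :=
  if j < m then isUL (stepAt ν j) else false

def psi {m : ℕ} (w0 : ℕ × ℕ × ℕ) (ν : WPath m) : WPath (m + 1) where
  step j := if (j : ℕ) = 0 then (if nmB ν 0 then .U else .L)
    else psiStep (stepAt ν ((j : ℕ) - 1)) (nmB ν j)
  wt j := if (j : ℕ) = 0 then w0 else wtAt ν ((j : ℕ) - 1)

/-! ### Basic lemmas -/

lemma WPath.ext' {n : ℕ} {μ ν : WPath n} (hs : μ.step = ν.step) (hw : μ.wt = ν.wt) :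
    μ = ν := by
  cases μ; cases ν; simp_all

lemma stepAt_fin {n : ℕ} (μ : WPath n) (j : Fin n) : stepAt μ j = μ.step j := by
  simp [stepAt, j.isLt]

lemma wtAt_fin {n : ℕ} (μ : WPath n) (j : Fin n) : wtAt μ j = μ.wt j := by
  simp [wtAt, j.isLt]

lemma ht_zero {n : ℕ} (μ : WPath n) : ht μ 0 = 0 := by simp [ht]

lemma ht_succ {n : ℕ} (μ : WPath n) {j : ℕ} (h : j < n) :
    ht μ (j + 1) = ht μ j + dh (stepAt μ j) := by
  simp [ht, Finset.sum_range_succ, stepAt, h]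

lemma dh_le_one (s : MStep) : dh s ≤ 1 := by cases s <;> simp [dh]

lemma ht_le {n : ℕ} (μ : WPath n) (j : ℕ) : ht μ j ≤ (j : ℤ) := by
  induction j with
  | zero => simp [ht_zero]
  | succ j ih =>
    by_cases h : j < n
    · rw [ht_succ μ h]
      have := dh_le_one (stepAt μ j)
      push_cast; omega
    · have : ht μ (j+1) = ht μ j := by simp [ht, Finset.sum_range_succ, h]
      rw [this]; push_cast; omega

lemma dh_phiStepB (mb : Bool) (cur : MStep) :
    dh (phiStepB mb cur) =
      dh cur + (if mb then 1 else 0) - (if isUW cur then 1 else 0) := by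
  cases mb <;> cases cur <;> simp [phiStepB, isUW, dh]

lemma dh_psiStep (c : MStep) (b : Bool) :
    dh (psiStep c b) = dh c + (if b then 1 else 0) - (if isUL c then 1 else 0) := by
  cases c <;> cases b <;> simp [psiStep, isUW, isUL, dh]

lemma phiStepB_psiStep (c : MStep) (b : Bool) :
    phiStepB (isUL c) (psiStep c b) = c := by cases c <;> cases b <;> rfl

lemma psiStep_phiStepB (mb : Bool) (cur : MStep) :
    psiStep (phiStepB mb cur) (isUW cur) = cur := by cases mb <;> cases cur <;> rfl

lemma isUL_phiStepB (mb : Bool) (cur : MStep) : isUL (phiStepB mb cur) = mb := by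
  cases mb <;> cases cur <;> rfl

lemma isUW_psiStep (c : MStep) (b : Bool) : isUW (psiStep c b) = b := by
  cases c <;> cases b <;> rfl

/-! ### First and last steps of an M-path -/

lemma M_first {m : ℕ} (μ : WPath (m + 1)) (hM : Mcond μ) : isUL (stepAt μ 0) = true := by
  have h0 : (0 : ℕ) < m + 1 := Nat.succ_pos m
  have hht1 : ht μ 1 = dh (stepAt μ 0) := by rw [ht_succ μ h0, ht_zero]; ring
  have hnn : 0 ≤ ht μ 1 := hM.1.1 1 (by omega)
  have hW := (hM.2 ⟨0, h0⟩).2.2.1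
  rw [← stepAt_fin μ ⟨0, h0⟩] at hW
  have hz : ht μ ((⟨0, h0⟩ : Fin (m+1)) : ℕ) = 0 := ht_zero μ
  cases hs : stepAt μ 0 <;> simp [isUL]
  · rw [hs, dh] at hht1; omega
  · have := hW hs; rw [hz] at this; omega

lemma M_last {m : ℕ} (μ : WPath (m + 1)) (hM : Mcond μ) : isUW (stepAt μ m) = false := by
  have h0 : m < m + 1 := Nat.lt_succ_self m
  have hht : ht μ (m + 1) = ht μ m + dh (stepAt μ m) := ht_succ μ h0
  have hend : ht μ (m + 1) = 0 := hM.1.2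
  have hnn : 0 ≤ ht μ m := hM.1.1 m (by omega)
  have hW := (hM.2 ⟨m, h0⟩).2.2.1
  rw [← stepAt_fin μ ⟨m, h0⟩] at hW
  cases hs : stepAt μ m <;> simp [isUW]
  · rw [hs, dh] at hht; omega
  · have := hW hs
    rw [hs, dh] at hht
    simp only [Fin.val_mk] at this
    omega

/-! ### Height lemmas -/

lemma ht_phi {m : ℕ} (μ : WPath (m + 1)) (h0 : isUL (stepAt μ 0) = true) :
    ∀ j ≤ m, ht (phi μ) j = ht μ (j + 1) - (if isUW (stepAt μ j) then 1 else 0) := by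
  intro j hj
  induction j with
  | zero =>
    rw [ht_zero, ht_succ μ (Nat.succ_pos m), ht_zero]
    cases hs : stepAt μ 0 <;> simp [hs, isUL] at h0 ⊢ <;> simp [dh, isUW]
  | succ j ih =>
    have hjm : j < m := hj
    have hstep : stepAt (phi μ) j = phiStepB (isUW (stepAt μ j)) (stepAt μ (j + 1)) := by
      simp [stepAt, phi, hjm, hjm.le]
    rw [ht_succ (phi μ) hjm, ih (by omega), hstep, dh_phiStepB,
      ht_succ μ (show j + 1 < m + 1 by omega)]
    ring

lemma ht_psi {m : ℕ} (w0 : ℕ × ℕ × ℕ) (ν : WPath m) :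
    ∀ j ≤ m, ht (psi w0 ν) (j + 1) = ht ν j + (if nmB ν j then 1 else 0) := by
  intro j hj
  induction j with
  | zero =>
    have h0 : (0:ℕ) < m + 1 := Nat.succ_pos m
    have hstep : stepAt (psi w0 ν) 0 = (if nmB ν 0 then MStep.U else MStep.L) := by
      simp [stepAt, psi, h0]
    rw [ht_succ _ h0, ht_zero, ht_zero, hstep]
    cases nmB ν 0 <;> simp [dh]
  | succ j ih =>
    have hjm : j < m := hj
    have hstep : stepAt (psi w0 ν) (j + 1) = psiStep (stepAt ν j) (nmB ν (j + 1)) := by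
      simp [stepAt, psi, show j + 1 < m + 1 by omega]
    have hnm : nmB ν j = isUL (stepAt ν j) := by simp [nmB, hjm]
    rw [ht_succ _ (show j + 1 < m + 1 by omega), ih (by omega), hstep, dh_psiStep,
      ht_succ ν hjm, hnm]
    ring

/-! ### Weight transfer lemmas -/

lemma transfer1 (mb : Bool) (cur : MStep) (w : ℕ × ℕ × ℕ) (h H : ℤ)
    (hH : H = h - (if mb then 1 else 0))
    (hU : cur = .U → wY2 w 0 h ∨ wYT w h (2 * h))
    (hL : cur = .L → wY2 w 0 h ∨ wYT w h (2 * h))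
    (hW : cur = .W → 1 ≤ h ∧ (wQ w 0 (h - 1) ∨ wYT w h (2 * h - 1)))
    (hD : cur = .D → wQ w 0 (h - 1) ∨ wYT w h (2 * h - 1)) :
    (phiStepB mb cur = .U → wY2 w 0 (H + 1) ∨ wYT w (H + 1) (2 * H + 2)) ∧
    (phiStepB mb cur = .L → wQ w 0 H ∨ wYT w (H + 1) (2 * H + 1)) ∧
    (phiStepB mb cur = .W → wY2 w 0 H ∨ wYT w H (2 * H)) ∧
    (phiStepB mb cur = .D → wQ w 0 (H - 1) ∨ wYT w H (2 * H - 1)) := by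
  cases mb <;> cases cur <;>
    simp_all [phiStepB, wY2, wYT, wQ] <;> omega

lemma transfer2 (c : MStep) (b : Bool) (w : ℕ × ℕ × ℕ) (H h : ℤ)
    (hh : h = H + (if isUL c then 1 else 0))
    (hH0 : 0 ≤ H) (hHD : c = .D → 1 ≤ H)
    (hU : c = .U → wY2 w 0 (H + 1) ∨ wYT w (H + 1) (2 * H + 2))
    (hL : c = .L → wQ w 0 H ∨ wYT w (H + 1) (2 * H + 1))
    (hW : c = .W → wY2 w 0 H ∨ wYT w H (2 * H))
    (hD : c = .D → wQ w 0 (H - 1) ∨ wYT w H (2 * H - 1)) :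
    (psiStep c b = .U → wY2 w 0 h ∨ wYT w h (2 * h)) ∧
    (psiStep c b = .L → wY2 w 0 h ∨ wYT w h (2 * h)) ∧
    (psiStep c b = .W → 1 ≤ h ∧ (wQ w 0 (h - 1) ∨ wYT w h (2 * h - 1))) ∧
    (psiStep c b = .D → wQ w 0 (h - 1) ∨ wYT w h (2 * h - 1)) := by
  cases c <;> cases b <;>
    simp_all [psiStep, isUW, isUL, wY2, wYT, wQ] <;> omega

lemma M_pos {m : ℕ} (μ : WPath (m + 1)) (hM : Mcond μ) {j : ℕ} (hj : j < m + 1)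
    (hUW : isUW (stepAt μ j) = true) : 1 ≤ ht μ (j + 1) := by
  have hnn : 0 ≤ ht μ j := hM.1.1 j (by omega)
  have hs := ht_succ μ hj
  cases hc : stepAt μ j <;> rw [hc] at hs hUW <;> simp [isUW] at hUW <;> simp [dh] at hs
  · omega
  · have hW := (hM.2 ⟨j, hj⟩).2.2.1 (by rw [← stepAt_fin μ ⟨j, hj⟩]; exact hc)
    simp only [Fin.val_mk] at hW
    omega

lemma Hcond_phi {m : ℕ} (μ : WPath (m + 1)) (hM : Mcond μ) : Hcond (phi μ) := by
  have h0 := M_first μ hM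
  constructor
  · constructor
    · intro j hj
      rw [ht_phi μ h0 j hj]
      have hnn : 0 ≤ ht μ (j + 1) := hM.1.1 _ (by omega)
      by_cases he : isUW (stepAt μ j) = true
      · have h1 : 1 ≤ ht μ (j + 1) := M_pos μ hM (by omega) he
        rw [he]; simp; omega
      · simp only [Bool.not_eq_true] at he
        rw [he]; simp; omega
    · rw [ht_phi μ h0 m le_rfl, M_last μ hM, hM.1.2]; simp
  · intro j
    have hj : (j : ℕ) < m := j.isLt
    have hjs : (j : ℕ) + 1 < m + 1 := by omega
    have hMj := hM.2 ⟨(j : ℕ) + 1, hjs⟩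
    rw [← stepAt_fin μ ⟨_, hjs⟩, ← wtAt_fin μ ⟨_, hjs⟩] at hMj
    simp only [Fin.val_mk] at hMj
    have hA : ht (phi μ) j = ht μ ((j : ℕ) + 1) - (if isUW (stepAt μ (j : ℕ)) then 1 else 0) :=
      ht_phi μ h0 j (le_of_lt hj)
    have key := transfer1 (isUW (stepAt μ (j : ℕ))) (stepAt μ ((j : ℕ) + 1))
      (wtAt μ ((j : ℕ) + 1)) (ht μ ((j : ℕ) + 1)) (ht (phi μ) j) hA
      hMj.1 hMj.2.1 hMj.2.2.1 hMj.2.2.2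
    have hstep : (phi μ).step j = phiStepB (isUW (stepAt μ (j : ℕ))) (stepAt μ ((j : ℕ) + 1)) := rfl
    have hwt : (phi μ).wt j = wtAt μ ((j : ℕ) + 1) := rfl
    rw [hstep, hwt]
    exact key

lemma Mcond_psi {m : ℕ} (w0 : ℕ × ℕ × ℕ) (hw : w0 = (2, 0, 0) ∨ w0 = (1, 1, 0))
    (ν : WPath m) (hH : Hcond ν) : Mcond (psi w0 ν) := by
  have hnmlast : nmB ν m = false := by simp [nmB]
  constructor
  · constructor
    · intro j hj
      match j with
      | 0 => rw [ht_zero]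
      | (k + 1) =>
        rw [ht_psi w0 ν k (by omega)]
        have := hH.1.1 k (by omega)
        by_cases hb : nmB ν k = true <;> simp [hb] <;> omega
    · rw [ht_psi w0 ν m le_rfl, hnmlast, hH.1.2]; simp
  · intro j
    rcases hj0 : (j : ℕ) with _ | k
    · -- first step
      have hstep : (psi w0 ν).step j = (if nmB ν 0 then MStep.U else MStep.L) := by
        show (if (j : ℕ) = 0 then _ else _) = _
        rw [hj0]; simp
      have hwt : (psi w0 ν).wt j = w0 := by
        show (if (j : ℕ) = 0 then _ else _) = _
        rw [hj0]; simp
      rw [hstep, hwt, ht_zero]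
      have hfirst : wY2 w0 0 0 ∨ wYT w0 0 0 := by
        rcases hw with hw | hw <;> rw [hw]
        · exact Or.inl ⟨rfl, rfl, by norm_num⟩
        · exact Or.inr ⟨rfl, rfl, by norm_num⟩
      refine ⟨fun _ => by simpa using hfirst, fun _ => by simpa using hfirst, ?_, ?_⟩ <;>
        · intro hc
          by_cases hb : nmB ν 0 = true <;> simp [hb] at hc
    · -- later steps
      have hk : k < m := by have := j.isLt; omega
      have hstep : (psi w0 ν).step j = psiStep (stepAt ν k) (nmB ν (k + 1)) := by
        show (if (j : ℕ) = 0 then _ else _) = _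
        rw [hj0]; simp
      have hwt : (psi w0 ν).wt j = wtAt ν k := by
        show (if (j : ℕ) = 0 then _ else _) = _
        rw [hj0]; simp
      have hHk := hH.2 ⟨k, hk⟩
      rw [← stepAt_fin ν ⟨k, hk⟩, ← wtAt_fin ν ⟨k, hk⟩] at hHk
      simp only [Fin.val_mk] at hHk
      have hnm : nmB ν k = isUL (stepAt ν k) := by simp [nmB, hk]
      have hh : ht (psi w0 ν) (k + 1) = ht ν k + (if isUL (stepAt ν k) then 1 else 0) := by
        rw [ht_psi w0 ν k (by omega), hnm]
      have hHD : stepAt ν k = MStep.D → 1 ≤ ht ν k := by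
        intro hc
        have hs := ht_succ ν hk
        rw [hc] at hs; simp [dh] at hs
        have := hH.1.1 (k + 1) (by omega)
        omega
      have key := transfer2 (stepAt ν k) (nmB ν (k + 1)) (wtAt ν k) (ht ν k)
        (ht (psi w0 ν) (k + 1)) hh (hH.1.1 k (by omega)) hHD
        hHk.1 hHk.2.1 hHk.2.2.1 hHk.2.2.2
      rw [hstep, hwt]
      exact key

/-! ### Round trips -/

lemma stepAt_psi_zero {m : ℕ} (w0 : ℕ × ℕ × ℕ) (ν : WPath m) :
    stepAt (psi w0 ν) 0 = (if nmB ν 0 then MStep.U else MStep.L) := by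
  simp [stepAt, psi]

lemma stepAt_psi_succ {m : ℕ} (w0 : ℕ × ℕ × ℕ) (ν : WPath m) {k : ℕ} (hk : k + 1 < m + 1) :
    stepAt (psi w0 ν) (k + 1) = psiStep (stepAt ν k) (nmB ν (k + 1)) := by
  simp [stepAt, psi, hk]

lemma isUW_stepAt_psi {m : ℕ} (w0 : ℕ × ℕ × ℕ) (ν : WPath m) {k : ℕ} (hk : k < m + 1) :
    isUW (stepAt (psi w0 ν) k) = nmB ν k := by
  match k with
  | 0 =>
    rw [stepAt_psi_zero]
    cases hb : nmB ν 0 <;> simp [hb, isUW]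
  | (k + 1) =>
    rw [stepAt_psi_succ w0 ν hk, isUW_psiStep]

lemma phi_psi {m : ℕ} (w0 : ℕ × ℕ × ℕ) (ν : WPath m) : phi (psi w0 ν) = ν := by
  apply WPath.ext'
  · funext j
    have hj : (j : ℕ) < m := j.isLt
    have hstep : (phi (psi w0 ν)).step j =
        phiStepB (isUW (stepAt (psi w0 ν) (j : ℕ))) (stepAt (psi w0 ν) ((j : ℕ) + 1)) := rfl
    rw [hstep, isUW_stepAt_psi w0 ν (by omega), stepAt_psi_succ w0 ν (by omega)]
    have hnm1 : nmB ν (j : ℕ) = isUL (stepAt ν (j : ℕ)) := by simp [nmB, hj]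
    rw [hnm1, phiStepB_psiStep, stepAt_fin]
  · funext j
    have hj : (j : ℕ) < m := j.isLt
    have hwt : (phi (psi w0 ν)).wt j = wtAt (psi w0 ν) ((j : ℕ) + 1) := rfl
    rw [hwt]
    simp [wtAt, psi, show (j : ℕ) + 1 < m + 1 by omega, Fin.eta]

lemma nmB_phi {m : ℕ} (μ : WPath (m + 1)) (hM : Mcond μ) {k : ℕ} (hk : k < m + 1) :
    nmB (phi μ) k = isUW (stepAt μ k) := by
  by_cases h : k < m
  · have : stepAt (phi μ) k = phiStepB (isUW (stepAt μ k)) (stepAt μ (k + 1)) := by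
      simp [stepAt, phi, h, h.le]
    simp [nmB, h, this, isUL_phiStepB]
  · have hkm : k = m := by omega
    rw [hkm, M_last μ hM]
    simp [nmB]

lemma psi_phi {m : ℕ} (μ : WPath (m + 1)) (hM : Mcond μ) :
    psi (wtAt μ 0) (phi μ) = μ := by
  apply WPath.ext'
  · funext j
    rcases hj0 : (j : ℕ) with _ | k
    · have hstep : (psi (wtAt μ 0) (phi μ)).step j =
          (if nmB (phi μ) 0 then MStep.U else MStep.L) := by
        show (if (j : ℕ) = 0 then _ else _) = _
        rw [hj0]; simp
      rw [hstep, nmB_phi μ hM (Nat.succ_pos m)]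
      have h0 := M_first μ hM
      have : μ.step j = stepAt μ 0 := by rw [← stepAt_fin μ j, hj0]
      rw [this]
      cases hs : stepAt μ 0 <;> simp_all [isUL, isUW]
    · have hk1 : k + 1 < m + 1 := by rw [← hj0]; exact j.isLt
      have hstep : (psi (wtAt μ 0) (phi μ)).step j =
          psiStep (stepAt (phi μ) k) (nmB (phi μ) (k + 1)) := by
        show (if (j : ℕ) = 0 then _ else _) = _
        rw [hj0]; simp
      have hsk : stepAt (phi μ) k = phiStepB (isUW (stepAt μ k)) (stepAt μ (k + 1)) := by
        simp [stepAt, phi, show k < m by omega, show k ≤ m by omega]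
      rw [hstep, hsk, nmB_phi μ hM hk1, psiStep_phiStepB]
      rw [← stepAt_fin μ j, hj0]
  · funext j
    rcases hj0 : (j : ℕ) with _ | k
    · have hwt : (psi (wtAt μ 0) (phi μ)).wt j = wtAt μ 0 := by
        show (if (j : ℕ) = 0 then _ else _) = _
        rw [hj0]; simp
      rw [hwt, ← wtAt_fin μ j, hj0]
    · have hk1 : k + 1 < m + 1 := by rw [← hj0]; exact j.isLt
      have hwt : (psi (wtAt μ 0) (phi μ)).wt j = wtAt (phi μ) k := by
        show (if (j : ℕ) = 0 then _ else _) = _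
        rw [hj0]; simp
      have : wtAt (phi μ) k = wtAt μ (k + 1) := by
        simp [wtAt, phi, show k < m by omega]
      rw [hwt, this, ← wtAt_fin μ j, hj0]

/-! ### Weight polynomial lemmas -/

noncomputable def wterm (w : ℕ × ℕ × ℕ) : MvPolynomial (Fin 3) ℤ :=
  yv ^ w.1 * tv ^ w.2.1 * qv ^ w.2.2

lemma rho_split {m : ℕ} (μ : WPath (m + 1)) :
    rho μ = wterm (wtAt μ 0) * rho (phi μ) := by
  rw [rho, Fin.prod_univ_succ]
  refine congrArg₂ (· * ·) ?_ ?_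
  · have h : wtAt μ 0 = μ.wt 0 := by
      rw [wtAt, dif_pos (Nat.succ_pos m)]
      congr
    rw [h]; rfl
  · rw [rho]
    apply Finset.prod_congr rfl
    intro j _
    have : (phi μ).wt j = wtAt μ ((j : ℕ) + 1) := rfl
    rw [this, wtAt, dif_pos (show (j : ℕ) + 1 < m + 1 by omega)]
    rfl

lemma wterm_y2 : wterm (2, 0, 0) = yv ^ 2 := by simp [wterm]

lemma wterm_yt : wterm (1, 1, 0) = yv * tv := by simp [wterm]

lemma rho_ne_zero {n : ℕ} (μ : WPath n) : rho μ ≠ 0 := by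
  rw [rho]
  apply Finset.prod_ne_zero_iff.mpr
  intro j _
  exact mul_ne_zero (mul_ne_zero (pow_ne_zero _ (MvPolynomial.X_ne_zero _))
    (pow_ne_zero _ (MvPolynomial.X_ne_zero _))) (pow_ne_zero _ (MvPolynomial.X_ne_zero _))

lemma y2_ne_yt : yv ^ 2 ≠ yv * tv := by
  intro h
  have := congrArg (MvPolynomial.eval (fun i : Fin 3 => if i = 0 then (1 : ℤ) else 0)) h
  simp [yv, tv] at this

lemma Mwt0 {m : ℕ} (μ : WPath (m + 1)) (hM : Mcond μ) :
    wtAt μ 0 = (2, 0, 0) ∨ wtAt μ 0 = (1, 1, 0) := by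
  have h0 : (0 : ℕ) < m + 1 := Nat.succ_pos m
  have hMj := hM.2 ⟨0, h0⟩
  rw [← stepAt_fin μ ⟨0, h0⟩, ← wtAt_fin μ ⟨0, h0⟩] at hMj
  simp only [Fin.val_mk] at hMj
  rw [show ht μ 0 = 0 from ht_zero μ] at hMj
  have hUL := M_first μ hM
  have key : wY2 (wtAt μ 0) 0 0 ∨ wYT (wtAt μ 0) 0 0 := by
    cases hs : stepAt μ 0 <;> rw [hs] at hUL hMj <;> simp [isUL] at hUL
    · simpa using hMj.1 rfl
    · simpa using hMj.2.1 rfl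
  rcases key with ⟨h1, h2, h3, h4⟩ | ⟨h1, h2, h3, h4⟩
  · left
    have h5 : (wtAt μ 0).2.2 = 0 := by omega
    exact Prod.ext h1 (Prod.ext h2 h5)
  · right
    have h5 : (wtAt μ 0).2.2 = 0 := by omega
    exact Prod.ext h1 (Prod.ext h2 h5)

/-! ### Finiteness -/

lemma Hwt_bound {k : ℕ} {ν : WPath k} (hH : Hcond ν) (j : Fin k) :
    (ν.wt j).1 < 3 ∧ (ν.wt j).2.1 < 2 ∧ (ν.wt j).2.2 < 2 * k + 3 := by
  have hle : ht ν j ≤ (k : ℤ) :=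
    le_trans (ht_le ν j) (by exact_mod_cast Nat.le_of_lt j.isLt)
  have hHj := hH.2 j
  cases hs : ν.step j
  · rcases hHj.1 hs with h | h <;> simp only [wY2, wYT, wQ] at h <;> omega
  · rcases hHj.2.2.2 hs with h | h <;> simp only [wY2, wYT, wQ] at h <;> omega
  · rcases hHj.2.1 hs with h | h <;> simp only [wY2, wYT, wQ] at h <;> omega
  · rcases hHj.2.2.1 hs with h | h <;> simp only [wY2, wYT, wQ] at h <;> omega

lemma Hfin {k : ℕ} : Set.Finite {ν : WPath k | Hcond ν} := by
  classical
  set T : Finset (ℕ × ℕ × ℕ) :=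
    Finset.range 3 ×ˢ Finset.range 2 ×ˢ Finset.range (2 * k + 3) with hT
  have key : {ν : WPath k | Hcond ν} ⊆
      (fun p : (Fin k → MStep) × (Fin k → ℕ × ℕ × ℕ) => WPath.mk p.1 p.2) ''
        (Set.univ ×ˢ Set.pi Set.univ fun _ => (T : Set (ℕ × ℕ × ℕ))) := by
    intro ν hν
    refine ⟨(ν.step, ν.wt), ⟨trivial, ?_⟩, by cases ν; rfl⟩
    intro j _
    have hb := Hwt_bound hν j
    simp only [hT, Finset.coe_product, Set.mem_prod, Finset.mem_coe, Finset.mem_range]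
    exact ⟨hb.1, hb.2.1, hb.2.2⟩
  apply Set.Finite.subset _ key
  apply Set.Finite.image
  apply Set.Finite.prod Set.finite_univ
  exact Set.Finite.pi fun _ => T.finite_toSet

/-! ### Further helpers -/

lemma wtAt_psi_zero {m : ℕ} (w0 : ℕ × ℕ × ℕ) (ν : WPath m) :
    wtAt (psi w0 ν) 0 = w0 := by simp [wtAt, psi]

lemma rho_psi {m : ℕ} (w0 : ℕ × ℕ × ℕ) (ν : WPath m) :
    rho (psi w0 ν) = wterm w0 * rho ν := by
  rw [rho_split (psi w0 ν), wtAt_psi_zero, phi_psi]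

lemma uniq_M {m : ℕ} (ν : WPath m) (μ : WPath (m + 1)) (hM : Mcond μ)
    (hphi : phi μ = ν) : μ = psi (wtAt μ 0) ν := by
  rw [← hphi]; exact (psi_phi μ hM).symm

lemma psi_ne {m : ℕ} (ν ν' : WPath m) : psi (2, 0, 0) ν ≠ psi (1, 1, 0) ν' := by
  intro h
  have := congrArg (fun p => wtAt p 0) h
  simp only [wtAt_psi_zero] at this
  exact absurd this (by decide)

lemma psi_injOn {m : ℕ} (w0 : ℕ × ℕ × ℕ) (s : Set (WPath m)) :
    Set.InjOn (psi w0) s := by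
  intro a _ b _ h
  have := congrArg phi h
  rwa [phi_psi, phi_psi] at this

lemma Mset_eq {m : ℕ} :
    {μ : WPath (m + 1) | Mcond μ} =
      psi (2, 0, 0) '' {ν : WPath m | Hcond ν} ∪
        psi (1, 1, 0) '' {ν : WPath m | Hcond ν} := by
  ext μ
  simp only [Set.mem_setOf_eq, Set.mem_union, Set.mem_image]
  constructor
  · intro hM
    have hH : Hcond (phi μ) := Hcond_phi μ hM
    have he := uniq_M (phi μ) μ hM rfl
    rcases Mwt0 μ hM with h | h
    · exact Or.inl ⟨phi μ, hH, by rw [← h, ← he]⟩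
    · exact Or.inr ⟨phi μ, hH, by rw [← h, ← he]⟩
  · rintro (⟨ν, hν, rfl⟩ | ⟨ν, hν, rfl⟩)
    · exact Mcond_psi _ (Or.inl rfl) ν hν
    · exact Mcond_psi _ (Or.inr rfl) ν hν

theorem statement12' (n : ℕ) (hn : 1 ≤ n) :
    ∃ Φ : WPath n → WPath (n - 1),
      (∀ μ : WPath n, Mcond μ → Hcond (Φ μ)) ∧
      (∀ μ : WPath n, Mcond μ →
        rho μ = yv ^ 2 * rho (Φ μ) ∨ rho μ = yv * tv * rho (Φ μ)) ∧
      (∀ ν : WPath (n - 1), Hcond ν →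
        ∃! μ : WPath n, Mcond μ ∧ Φ μ = ν ∧ rho μ = yv ^ 2 * rho ν) ∧
      (∀ ν : WPath (n - 1), Hcond ν →
        ∃! μ : WPath n, Mcond μ ∧ Φ μ = ν ∧ rho μ = yv * tv * rho ν) ∧
      (∀ ν : WPath (n - 1), Hcond ν →
        Set.ncard {μ : WPath n | Mcond μ ∧ Φ μ = ν} = 2) ∧
      (∑ᶠ μ ∈ {μ : WPath n | Mcond μ}, rho μ) =
        (yv ^ 2 + yv * tv) * ∑ᶠ ν ∈ {ν : WPath (n - 1) | Hcond ν}, rho ν := by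
  obtain ⟨m, rfl⟩ : ∃ m, n = m + 1 := ⟨n - 1, by omega⟩
  refine ⟨phi, fun μ hM => Hcond_phi μ hM, ?_, ?_, ?_, ?_, ?_⟩
  · intro μ hM
    rcases Mwt0 μ hM with h | h
    · left; rw [rho_split μ, h, wterm_y2]
    · right; rw [rho_split μ, h, wterm_yt]
  · intro ν hν
    refine ⟨psi (2, 0, 0) ν, ⟨Mcond_psi _ (Or.inl rfl) ν hν, phi_psi _ ν,
      by rw [rho_psi, wterm_y2]⟩, ?_⟩
    rintro μ' ⟨hM', hphi', hrho'⟩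
    have he := uniq_M ν μ' hM' hphi'
    rcases Mwt0 μ' hM' with h | h
    · rw [he, h]
    · exfalso
      rw [he, h, rho_psi, wterm_yt] at hrho'
      exact y2_ne_yt (mul_right_cancel₀ (rho_ne_zero ν) hrho').symm
  · intro ν hν
    refine ⟨psi (1, 1, 0) ν, ⟨Mcond_psi _ (Or.inr rfl) ν hν, phi_psi _ ν,
      by rw [rho_psi, wterm_yt]⟩, ?_⟩
    rintro μ' ⟨hM', hphi', hrho'⟩
    have he := uniq_M ν μ' hM' hphi'
    rcases Mwt0 μ' hM' with h | h
    · exfalso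
      rw [he, h, rho_psi, wterm_y2] at hrho'
      exact y2_ne_yt (mul_right_cancel₀ (rho_ne_zero ν) hrho')
    · rw [he, h]
  · intro ν hν
    have hset : {μ : WPath (m + 1) | Mcond μ ∧ phi μ = ν} =
        {psi (2, 0, 0) ν, psi (1, 1, 0) ν} := by
      ext μ
      simp only [Set.mem_setOf_eq, Set.mem_insert_iff, Set.mem_singleton_iff]
      constructor
      · rintro ⟨hM, hphi⟩
        have he := uniq_M ν μ hM hphi
        rcases Mwt0 μ hM with h | h
        · left; rw [he, h]
        · right; rw [he, h]
      · rintro (rfl | rfl)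
        · exact ⟨Mcond_psi _ (Or.inl rfl) ν hν, phi_psi _ ν⟩
        · exact ⟨Mcond_psi _ (Or.inr rfl) ν hν, phi_psi _ ν⟩
    rw [hset]
    exact Set.ncard_pair (psi_ne ν ν)
  · have hdisj : Disjoint (psi (2, 0, 0) '' {ν : WPath m | Hcond ν})
        (psi (1, 1, 0) '' {ν : WPath m | Hcond ν}) := by
      rw [Set.disjoint_left]
      rintro x ⟨ν, _, rfl⟩ ⟨ν', _, hx⟩
      exact psi_ne ν ν' hx.symm
    rw [Mset_eq, finsum_mem_union hdisj (Hfin.image _) (Hfin.image _),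
      finsum_mem_image (psi_injOn _ _), finsum_mem_image (psi_injOn _ _)]
    have h2 : ∀ ν : WPath m, rho (psi (2, 0, 0) ν) = yv ^ 2 * rho ν := by
      intro ν; rw [rho_psi, wterm_y2]
    have h1 : ∀ ν : WPath m, rho (psi (1, 1, 0) ν) = yv * tv * rho ν := by
      intro ν; rw [rho_psi, wterm_yt]
    rw [finsum_mem_congr rfl fun ν _ => h2 ν, finsum_mem_congr rfl fun ν _ => h1 ν,
      finsum_mem_eq_finite_toFinset_sum _ Hfin, finsum_mem_eq_finite_toFinset_sum _ Hfin,
      finsum_mem_eq_finite_toFinset_sum _ Hfin]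
    rw [add_mul]
    simp only [Finset.mul_sum]
    rfl
/-- Proposition 3.2: for `n ≥ 1` there is a two-to-one map `Φ : M_n → H_{n-1}`,
each fiber consisting of one path `μ` with `ρ(μ) = y² ρ(Φ μ)` and one with
`ρ(μ) = yt ρ(Φ μ)`; consequently `ρ(M_n) = (y² + yt) ρ(H_{n-1})`. -/
theorem statement12 (n : ℕ) (hn : 1 ≤ n) :
    ∃ Φ : WPath n → WPath (n - 1),
      (∀ μ : WPath n, Mcond μ → Hcond (Φ μ)) ∧
      (∀ μ : WPath n, Mcond μ →
        rho μ = yv ^ 2 * rho (Φ μ) ∨ rho μ = yv * tv * rho (Φ μ)) ∧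
      (∀ ν : WPath (n - 1), Hcond ν →
        ∃! μ : WPath n, Mcond μ ∧ Φ μ = ν ∧ rho μ = yv ^ 2 * rho ν) ∧
      (∀ ν : WPath (n - 1), Hcond ν →
        ∃! μ : WPath n, Mcond μ ∧ Φ μ = ν ∧ rho μ = yv * tv * rho ν) ∧
      (∀ ν : WPath (n - 1), Hcond ν →
        Set.ncard {μ : WPath n | Mcond μ ∧ Φ μ = ν} = 2) ∧
      (∑ᶠ μ ∈ {μ : WPath n | Mcond μ}, rho μ) =
        (yv ^ 2 + yv * tv) * ∑ᶠ ν ∈ {ν : WPath (n - 1) | Hcond ν}, rho ν := by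
  exact statement12' n hn
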